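/- The Stieltjes transform of the Wigner semicircle distribution μ_sc(dx) = (1/(2π))√(4 - x²)·1_{[-2,2]} dx, namely s(z) = ∫ (x - z)⁻¹ μ_sc(dx), satisfies the functional equation s(z)² + z·s(z) + 1 = 0 for all z ∈ ℂ \ [-2, 2] (equivalently s(z) = -1/(z + s(z))). -/

import Mathlib

open MeasureTheory Real
open scoped NNReal ENNReal

private lemma sc_cauchy_eval (p q : ℂ) (hp : ‖p‖ < 1) (hq : 1 < ‖q‖) :
    (∮ u in C((0:ℂ),1), (u - p)⁻¹ * (u - q)⁻¹) = 2 * π * Complex.I * (p - q)⁻¹ := by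
  have key : ∀ u ∈ Metric.closedBall (0:ℂ) 1, u - q ≠ 0 := by
    intro u hu h
    rw [sub_eq_zero] at h
    subst h
    simp only [Metric.mem_closedBall, dist_zero_right] at hu
    linarith
  have hd : DiffContOnCl ℂ (fun u => (u - q)⁻¹) (Metric.ball (0:ℂ) 1) := by
    apply DifferentiableOn.diffContOnCl
    intro u hu
    have hu' : u ∈ Metric.closedBall (0:ℂ) 1 := Metric.closure_ball_subset_closedBall hu
    exact ((differentiableAt_id.sub_const q).inv (key u hu')).differentiableWithinAt
  have := hd.circleIntegral_sub_inv_smul (w := p)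
    (by simpa using hp)
  simpa [smul_eq_mul, mul_comm, mul_assoc, mul_left_comm] using this

private lemma sc_trig_full (z p q : ℂ) (hp1 : p * q = 1) (hp2 : p + q = z)
    (hp : ‖p‖ < 1) (hq : 1 < ‖q‖)
    (hz : ∀ θ : ℝ, ((2 * Real.cos θ : ℝ) : ℂ) - z ≠ 0) :
    ∫ θ in (0:ℝ)..(2*π), (((2 * Real.cos θ : ℝ) : ℂ) - z)⁻¹ = 2 * π * (p - q)⁻¹ := by
  have hunfold : (∮ u in C((0:ℂ),1), (u - p)⁻¹ * (u - q)⁻¹)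
      = ∫ θ in (0:ℝ)..(2*π), Complex.I * (((2 * Real.cos θ : ℝ) : ℂ) - z)⁻¹ := by
    rw [circleIntegral]
    apply intervalIntegral.integral_congr
    intro θ _
    have he : circleMap 0 1 θ = Complex.exp (θ * Complex.I) := by simp [circleMap]
    set e := Complex.exp (θ * Complex.I) with hedef
    have hene : e ≠ 0 := Complex.exp_ne_zero _
    have hcos : e + e⁻¹ = ((2 * Real.cos θ : ℝ) : ℂ) := by
      rw [hedef, ← Complex.exp_neg]
      push_cast
      rw [Complex.cos]
      ring
    have hfact : (e - p) * (e - q) = e * (((2 * Real.cos θ : ℝ) : ℂ) - z) := by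
      rw [← hcos]
      field_simp
      ring_nf
      rw [← hp2, ← hp1]
      ring
    simp only [deriv_circleMap]
    rw [he, smul_eq_mul]
    rw [← mul_inv, hfact, mul_inv, ← mul_assoc]
    have hcz : ((2 * Real.cos θ : ℝ) : ℂ) - z ≠ 0 := hz θ
    field_simp
  have := sc_cauchy_eval p q hp hq
  rw [hunfold, intervalIntegral.integral_const_mul] at this
  exact mul_left_cancel₀ Complex.I_ne_zero (this.trans (by ring))

private lemma sc_trig_half (z p q : ℂ) (hp1 : p * q = 1) (hp2 : p + q = z)
    (hp : ‖p‖ < 1) (hq : 1 < ‖q‖)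
    (hz : ∀ θ : ℝ, ((2 * Real.cos θ : ℝ) : ℂ) - z ≠ 0) :
    ∫ θ in (0:ℝ)..π, (((2 * Real.cos θ : ℝ) : ℂ) - z)⁻¹ = π * (p - q)⁻¹ := by
  have hfull := sc_trig_full z p q hp1 hp2 hp hq hz
  set g : ℝ → ℂ := fun θ => (((2 * Real.cos θ : ℝ) : ℂ) - z)⁻¹ with hg
  have hgc : Continuous g := by
    apply Continuous.inv₀
    · continuity
    · exact hz
  have hsplit : (∫ θ in (0:ℝ)..(2*π), g θ)
      = (∫ θ in (0:ℝ)..π, g θ) + ∫ θ in π..(2*π), g θ :=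
    (intervalIntegral.integral_add_adjacent_intervals
      (hgc.intervalIntegrable _ _) (hgc.intervalIntegrable _ _)).symm
  have hrefl : (∫ θ in π..(2*π), g θ) = ∫ θ in (0:ℝ)..π, g θ := by
    have := intervalIntegral.integral_comp_sub_left (a := (0:ℝ)) (b := π) g (2*π)
    rw [show 2*π - π = π by ring, show 2*π - 0 = 2*π by ring] at this
    rw [← this]
    apply intervalIntegral.integral_congr
    intro θ _
    simp [hg, Real.cos_two_pi_sub, Complex.cos_two_pi_sub]
  rw [hsplit, hrefl] at hfull
  have h2 : (2:ℂ) * (∫ θ in (0:ℝ)..π, g θ) = 2 * ((π:ℂ) * (p - q)⁻¹) := by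
    rw [two_mul, hfull]; ring
  exact mul_left_cancel₀ two_ne_zero h2

private lemma sc_roots (z : ℂ) (hzmem : z ∉ (fun x : ℝ => (x : ℂ)) '' Set.Icc (-2 : ℝ) 2) :
    ∃ p q : ℂ, p * q = 1 ∧ p + q = z ∧ ‖p‖ < 1 ∧ 1 < ‖q‖ := by
  obtain ⟨w, hw⟩ : ∃ w : ℂ, w ^ 2 = z ^ 2 - 4 :=
    IsAlgClosed.exists_pow_nat_eq (z^2-4) zero_lt_two
  set α : ℂ := (z + w) / 2 with hα
  set β : ℂ := (z - w) / 2 with hβ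
  have hprod : α * β = 1 := by rw [hα, hβ]; linear_combination (-1/4 : ℂ) * hw
  have hsum : α + β = z := by rw [hα, hβ]; ring
  have hα0 : α ≠ 0 := by
    intro h; rw [h, zero_mul] at hprod; norm_num at hprod
  have habs : ‖α‖ * ‖β‖ = 1 := by
    rw [← norm_mul, hprod, norm_one]
  have habsα : ‖α‖ ≠ 1 := by
    intro h1
    have hconj : α * starRingEnd ℂ α = 1 := by
      rw [Complex.mul_conj]
      norm_cast
      rw [← Complex.sq_norm, h1]; norm_num
    have hβval : β = starRingEnd ℂ α :=
      mul_left_cancel₀ hα0 (hprod.trans hconj.symm)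
    have hzre : z = ((2 * α.re : ℝ) : ℂ) := by
      rw [← hsum, hβval, Complex.add_conj]
    apply hzmem
    have hre : |α.re| ≤ 1 := by
      have := Complex.abs_re_le_norm α; rwa [h1] at this
    obtain ⟨hr1, hr2⟩ := abs_le.mp hre
    exact ⟨2 * α.re, ⟨by linarith, by linarith⟩, hzre.symm⟩
  rcases lt_or_gt_of_ne habsα with h | h
  · refine ⟨α, β, hprod, hsum, h, ?_⟩
    by_contra hb
    push_neg at hb
    nlinarith [norm_nonneg α, norm_nonneg β]
  · refine ⟨β, α, by rw [mul_comm]; exact hprod, by rw [add_comm]; exact hsum, ?_, h⟩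
    by_contra hb
    push_neg at hb
    nlinarith [norm_nonneg α, norm_nonneg β]

private lemma sc_stepA (z : ℂ) :
    (∫ x : ℝ, ((x:ℂ) - z)⁻¹ ∂(volume.withDensity (fun x =>
      Set.indicator (Set.Icc (-2 : ℝ) 2)
        (fun x => ENNReal.ofReal (Real.sqrt (4 - x ^ 2) / (2 * π))) x)))
      = (2*π)⁻¹ • ∫ x in (-2:ℝ)..2, (Real.sqrt (4 - x^2) : ℂ) * ((x:ℂ) - z)⁻¹ := by
  have h1 : (fun x : ℝ =>
      Set.indicator (Set.Icc (-2 : ℝ) 2)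
        (fun x => ENNReal.ofReal (Real.sqrt (4 - x ^ 2) / (2 * π))) x)
      = fun x : ℝ => ((Set.indicator (Set.Icc (-2 : ℝ) 2)
        (fun x => Real.toNNReal (Real.sqrt (4 - x ^ 2) / (2 * π))) x : ℝ≥0) : ℝ≥0∞) := by
    funext x
    by_cases hx : x ∈ Set.Icc (-2:ℝ) 2 <;> simp [hx, ENNReal.ofReal]
  rw [h1, integral_withDensity_eq_integral_smul]
  · have h2 : ∀ x : ℝ, (Set.indicator (Set.Icc (-2 : ℝ) 2)
        (fun x => Real.toNNReal (Real.sqrt (4 - x ^ 2) / (2 * π))) x) • ((x:ℂ) - z)⁻¹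
        = Set.indicator (Set.Icc (-2 : ℝ) 2)
          (fun x => (2*π)⁻¹ • ((Real.sqrt (4 - x^2) : ℂ) * ((x:ℂ) - z)⁻¹)) x := by
      intro x
      by_cases hx : x ∈ Set.Icc (-2:ℝ) 2
      · simp only [Set.indicator_of_mem hx]
        rw [NNReal.smul_def, Real.coe_toNNReal _ (by positivity)]
        rw [Complex.real_smul, Complex.real_smul]
        have hπ : (π:ℂ) ≠ 0 := by exact_mod_cast Real.pi_ne_zero
        push_cast
        field_simp
      · simp [Set.indicator_of_notMem hx]
    simp only [h2]
    rw [MeasureTheory.integral_indicator measurableSet_Icc,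
      MeasureTheory.integral_smul, MeasureTheory.integral_Icc_eq_integral_Ioc,
      ← intervalIntegral.integral_of_le (by norm_num : (-2:ℝ) ≤ 2)]
  · apply Measurable.indicator
    · apply Measurable.real_toNNReal
      fun_prop
    · exact measurableSet_Icc

private lemma sc_stepB (z : ℂ) (hne : ∀ x : ℝ, x ∈ Set.Icc (-2:ℝ) 2 → ((x:ℂ) - z) ≠ 0) :
    (∫ x in (-2:ℝ)..2, (Real.sqrt (4 - x^2) : ℂ) * ((x:ℂ) - z)⁻¹)
      = ∫ θ in (0:ℝ)..π, (((2*Real.sin θ) * (2*Real.sin θ) : ℝ):ℂ)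
          * (((2 * Real.cos θ : ℝ):ℂ) - z)⁻¹ := by
  have himg : ∀ θ : ℝ, (2 * Real.cos θ) ∈ Set.Icc (-2:ℝ) 2 := by
    intro θ
    constructor <;> nlinarith [Real.neg_one_le_cos θ, Real.cos_le_one θ]
  set g : ℝ → ℂ := fun x => (Real.sqrt (4 - x^2) : ℂ) * ((x:ℂ) - z)⁻¹ with hgdef
  have hgc : ContinuousOn g (Set.Icc (-2:ℝ) 2) := by
    apply ContinuousOn.mul
    · apply Continuous.continuousOn
      continuity
    · apply ContinuousOn.inv₀
      · apply Continuous.continuousOn; continuity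
      · exact fun x hx => hne x hx
  have hsub := intervalIntegral.integral_comp_smul_deriv'
    (a := π) (b := 0) (f := fun θ => 2 * Real.cos θ) (f' := fun θ => -2 * Real.sin θ)
    (g := g) ?_ ?_ ?_
  · rw [Real.cos_pi, Real.cos_zero] at hsub
    norm_num at hsub
    rw [← hsub, intervalIntegral.integral_symm 0 π, neg_neg]
    apply intervalIntegral.integral_congr
    intro θ hθ
    rw [Set.uIcc_of_le Real.pi_pos.le] at hθ
    have hsin : 0 ≤ Real.sin θ := Real.sin_nonneg_of_nonneg_of_le_pi hθ.1 hθ.2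
    have hsqrt : Real.sqrt (4 - (2*Real.cos θ)^2) = 2 * Real.sin θ := by
      rw [show 4 - (2*Real.cos θ)^2 = (2*Real.sin θ)^2 by
        nlinarith [Real.sin_sq_add_cos_sq θ]]
      exact Real.sqrt_sq (by linarith)
    simp only [Function.comp, hgdef, smul_eq_mul]
    push_cast [hsqrt]
    ring
  · intro θ _
    simpa using ((Real.hasDerivAt_cos θ).const_mul 2)
  · exact (continuous_const.mul Real.continuous_sin).continuousOn
  · apply hgc.mono
    intro x hx
    obtain ⟨θ, _, rfl⟩ := hx
    exact himg θ

private lemma sc_stepC (z : ℂ) (hzθ : ∀ θ : ℝ, ((2 * Real.cos θ : ℝ) : ℂ) - z ≠ 0) :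
    (∫ θ in (0:ℝ)..π, (((2*Real.sin θ) * (2*Real.sin θ) : ℝ):ℂ)
        * (((2 * Real.cos θ : ℝ):ℂ) - z)⁻¹)
      = -(π • z) - (z^2 - 4) * ∫ θ in (0:ℝ)..π, (((2 * Real.cos θ : ℝ):ℂ) - z)⁻¹ := by
  have hpt : ∀ θ : ℝ, (((2*Real.sin θ) * (2*Real.sin θ) : ℝ):ℂ)
        * (((2 * Real.cos θ : ℝ):ℂ) - z)⁻¹
      = (-(((2 * Real.cos θ : ℝ):ℂ)) - z) - (z^2-4) * (((2 * Real.cos θ : ℝ):ℂ) - z)⁻¹ := by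
    intro θ
    have hc := hzθ θ
    have pyth : ((Real.sin θ : ℂ))^2 + ((Real.cos θ : ℂ))^2 = 1 := by
      exact_mod_cast (Real.sin_sq_add_cos_sq θ)
    push_cast at hc pyth ⊢
    field_simp
    linear_combination (4:ℂ) * pyth
  simp only [hpt]
  have hint1 : IntervalIntegrable (fun θ : ℝ => -(((2 * Real.cos θ : ℝ):ℂ)) - z)
      MeasureTheory.volume 0 π := by
    apply Continuous.intervalIntegrable; continuity
  have hint2 : IntervalIntegrable
      (fun θ : ℝ => (z^2-4) * (((2 * Real.cos θ : ℝ):ℂ) - z)⁻¹)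
      MeasureTheory.volume 0 π := by
    apply Continuous.intervalIntegrable
    apply Continuous.mul continuous_const
    apply Continuous.inv₀
    · continuity
    · exact hzθ
  rw [intervalIntegral.integral_sub hint1 hint2, intervalIntegral.integral_const_mul]
  congr 1
  have hsplit : (∫ θ in (0:ℝ)..π, (-(((2 * Real.cos θ : ℝ):ℂ)) - z))
      = (∫ θ in (0:ℝ)..π, -(((2 * Real.cos θ : ℝ):ℂ))) - ∫ θ in (0:ℝ)..π, (z:ℂ) := by
    apply intervalIntegral.integral_sub
    · apply Continuous.intervalIntegrable; continuity
    · apply Continuous.intervalIntegrable; continuity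
  rw [hsplit]
  have h0 : (∫ θ in (0:ℝ)..π, -(((2 * Real.cos θ : ℝ):ℂ))) = 0 := by
    rw [intervalIntegral.integral_neg]
    rw [intervalIntegral.integral_ofReal]
    norm_num [intervalIntegral.integral_const_mul, integral_cos]
  rw [h0, intervalIntegral.integral_const]
  simp

/-- The Stieltjes transform `s(z) = ∫ (x - z)⁻¹ dμ_sc(x)` of the Wigner
semicircle distribution `μ_sc(dx) = (2π)⁻¹ √(4-x²) 1_{[-2,2]} dx` satisfies
`s(z)² + z s(z) + 1 = 0` for all `z ∈ ℂ \ [-2,2]`. -/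
theorem semicircle_stieltjes_functional_equation
    (μ : Measure ℝ)
    (hμ : μ = volume.withDensity (fun x =>
      Set.indicator (Set.Icc (-2 : ℝ) 2)
        (fun x => ENNReal.ofReal (Real.sqrt (4 - x ^ 2) / (2 * π))) x))
    (s : ℂ → ℂ)
    (hs : ∀ z : ℂ, s z = ∫ x : ℝ, ((x : ℂ) - z)⁻¹ ∂μ) :
    ∀ z : ℂ, z ∉ (fun x : ℝ => (x : ℂ)) '' Set.Icc (-2 : ℝ) 2 →
      s z ^ 2 + z * s z + 1 = 0 := by
  intro z hzmem
  have hne : ∀ x : ℝ, x ∈ Set.Icc (-2:ℝ) 2 → ((x:ℂ) - z) ≠ 0 := by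
    intro x hx h
    rw [sub_eq_zero] at h
    exact hzmem ⟨x, hx, h⟩
  have himg : ∀ θ : ℝ, (2 * Real.cos θ) ∈ Set.Icc (-2:ℝ) 2 := by
    intro θ
    constructor <;> nlinarith [Real.neg_one_le_cos θ, Real.cos_le_one θ]
  have hzθ : ∀ θ : ℝ, ((2 * Real.cos θ : ℝ) : ℂ) - z ≠ 0 :=
    fun θ => hne _ (himg θ)
  obtain ⟨p, q, hp1, hp2, hpabs, hqabs⟩ := sc_roots z hzmem
  have hrne : p - q ≠ 0 := by
    intro h
    rw [sub_eq_zero] at h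
    rw [h] at hpabs
    linarith
  have hr2 : (p - q) ^ 2 = z ^ 2 - 4 := by
    linear_combination (p + q + z) * hp2 - 4 * hp1
  have hC := sc_trig_half z p q hp1 hp2 hpabs hqabs hzθ
  have hπ : (π:ℂ) ≠ 0 := by exact_mod_cast Real.pi_ne_zero
  have hsval : s z = -(z + (p - q)) / 2 := by
    rw [hs z, hμ, sc_stepA z, sc_stepB z hne, sc_stepC z hzθ, hC]
    rw [Complex.real_smul, Complex.real_smul]
    push_cast
    rw [← hr2]
    field_simp
    ring
  rw [hsval]
  field_simp
  linear_combination (1:ℂ) * hr2
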